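/- Let A and B be groups with A nontrivial, and let G = A ∗ B be their free product with canonical inclusion ι_A : A → G. Then every element of G that commutes with every element of ι_A(A) lies in ι_A(A). In other words, the centralizer of ι_A(A) in G is contained in ι_A(A) (and hence equals the image of the center of A). -/

import Mathlib

namespace Stmt11Aux

open Monoid CoprodI

variable {ι : Type*} {G : ι → Type*} [∀ i, Group (G i)]

/-- Reverse a list of letters and invert each letter. -/
def rinv (L : List (Σ i, G i)) : List (Σ i, G i) :=
  (L.map fun l => ⟨l.1, l.2⁻¹⟩).reverse

lemma length_rinv (L : List (Σ i, G i)) : (rinv L).length = L.length := by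
  simp [rinv]

lemma rinv_rinv (L : List (Σ i, G i)) : rinv (rinv L) = L := by
  simp only [rinv, List.map_reverse, List.reverse_reverse, List.map_map]
  simp [Function.comp_def]

lemma rinv_cons (x : Σ i, G i) (L : List (Σ i, G i)) :
    rinv (x :: L) = rinv L ++ [⟨x.1, x.2⁻¹⟩] := by
  simp [rinv]

/-- The inverse of a reduced word. -/
def wordInv (w : Word G) : Word G where
  toList := rinv w.toList
  ne_one := by
    intro l hl
    rw [rinv, List.mem_reverse, List.mem_map] at hl
    obtain ⟨l', hl', rfl⟩ := hl
    exact inv_ne_one.2 (w.ne_one l' hl')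
  chain_ne := by
    rw [rinv, List.isChain_reverse]
    refine (List.isChain_map _).2 ?_
    exact w.chain_ne.imp fun a b h => Ne.symm h

lemma prod_wordInv (w : Word G) : (wordInv w).prod = w.prod⁻¹ := by
  rw [Word.prod, Word.prod, wordInv]
  simp only [rinv, List.map_reverse, List.map_map, List.prod_inv_reverse, Function.comp]
  simp [Function.comp_def]

variable [DecidableEq ι] [∀ i, DecidableEq (G i)]

lemma prod_equiv (g : CoprodI G) : (Word.equiv g).prod = g :=
  Word.equiv.symm_apply_apply g

lemma equiv_inv (g : CoprodI G) : Word.equiv g⁻¹ = wordInv (Word.equiv g) := by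
  apply Word.equiv.symm.injective
  rw [Equiv.symm_apply_apply]
  show g⁻¹ = (wordInv (Word.equiv g)).prod
  rw [prod_wordInv, prod_equiv]

lemma equiv_mul_eq_smul (x g : CoprodI G) : Word.equiv (x * g) = x • Word.equiv g :=
  by show (x * g) • (Word.empty : Word G) = x • g • (Word.empty : Word G)
     exact mul_smul x g Word.empty

/-- Multiplying on the left by a letter from a different summand than the first letter
just prepends the letter. -/
lemma equiv_of_mul {t : ι} {g : CoprodI G} (h : (Word.equiv g).fstIdx ≠ some t)
    {a : G t} (ha : a ≠ 1) :
    (Word.equiv (of a * g)).toList = ⟨t, a⟩ :: (Word.equiv g).toList := by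
  rw [equiv_mul_eq_smul, ← Word.cons_eq_smul (h1 := h) (h2 := ha)]
  rfl

/-- Multiplying on the left by a letter of the same summand as the first letter. -/
lemma exists_head {t : ι} {g : CoprodI G} (h : (Word.equiv g).fstIdx = some t) :
    ∃ (m : G t) (L' : List (Σ i, G i)), m ≠ 1 ∧
      (Word.equiv g).toList = ⟨t, m⟩ :: L' ∧
      (∀ l ∈ L'.head?, Sigma.fst l ≠ t) ∧
      ∀ a : G t, (Word.equiv (of a * g)).toList =
        if a * m = 1 then L' else ⟨t, a * m⟩ :: L' := by
  set w := Word.equiv g with hw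
  set p := Word.equivPair t w with hp
  have hrcons : Word.rcons p = w := by
    rw [hp, ← Word.equivPair_symm, Equiv.symm_apply_apply]
  have hm : p.head ≠ 1 := by
    intro h1
    have : w = p.tail := by rw [← hrcons, Word.rcons, dif_pos h1]
    exact p.fstIdx_ne (this ▸ h)
  refine ⟨p.head, p.tail.toList, hm, ?_, ?_, ?_⟩
  · rw [← hrcons, Word.rcons, dif_neg hm]
    rfl
  · intro l hl
    have := Word.fstIdx_ne_iff.mp p.fstIdx_ne l hl
    exact fun hh => this hh.symm
  · intro a
    have : Word.equiv (of a * g) = Word.rcons ⟨a * p.head, p.tail, p.fstIdx_ne⟩ := by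
      rw [equiv_mul_eq_smul, Word.of_smul_def, ← hw, ← hp]
    rw [this, Word.rcons]
    split_ifs with h1
    · rfl
    · rfl

variable (t : ι) [Nontrivial (G t)]

theorem main (g : CoprodI G) (hc : ∀ a : G t, of a * g = g * of a) :
    ∃ a : G t, g = of a := by
  obtain ⟨a₀, ha₀⟩ := exists_ne (1 : G t)
  have hLinv : (Word.equiv g⁻¹).toList = rinv (Word.equiv g).toList := by
    rw [equiv_inv]; rfl
  -- key identity
  have key : ∀ a : G t,
      (Word.equiv (of a * g)).toList = rinv (Word.equiv (of a⁻¹ * g⁻¹)).toList := by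
    intro a
    have h1 : of a * g = (of a⁻¹ * g⁻¹)⁻¹ := by
      rw [mul_inv_rev, inv_inv, ← map_inv, inv_inv, hc a]
    rw [h1, equiv_inv]
    rfl
  have word_eq_single : ∀ (m : G t), (Word.equiv g).toList = [⟨t, m⟩] → g = of m := by
    intro m hm
    have := prod_equiv g
    rw [Word.prod, hm] at this
    simpa using this.symm
  have word_eq_nil : (Word.equiv g).toList = [] → g = 1 := by
    intro hm
    have := prod_equiv g
    rw [Word.prod, hm] at this
    simpa using this.symm
  by_cases hp : (Word.equiv g).fstIdx = some t
  · obtain ⟨m, L', hm1, hL, hhead, hmul⟩ := exists_head hp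
    by_cases hq : (Word.equiv g⁻¹).fstIdx = some t
    · obtain ⟨m₂, L₂, hm₂1, hL₂, hhead₂, hmul₂⟩ := exists_head hq
      rw [hLinv, hL, rinv_cons] at hL₂
      -- hL₂ : rinv L' ++ [⟨t, m⁻¹⟩] = ⟨t, m₂⟩ :: L₂
      by_cases hL' : L' = []
      · exact ⟨m, word_eq_single m (by rw [hL, hL'])⟩
      exfalso
      have hlen : L₂.length = L'.length := by
        have := congrArg List.length hL₂
        simp [length_rinv] at this
        omega
      have hL₂ne : L₂ ≠ [] := by
        intro h0
        rw [h0, List.length_nil] at hlen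
        exact hL' (List.eq_nil_of_length_eq_zero hlen.symm)
      have hkey := key m⁻¹
      rw [hmul m⁻¹, if_pos (by simp), inv_inv, hmul₂ m] at hkey
      by_cases hmm : m * m₂ = 1
      · rw [if_pos hmm] at hkey
        have hL'' : rinv L' = L₂ := by rw [hkey, rinv_rinv]
        rw [hL''] at hL₂
        -- hL₂ : L₂ ++ [⟨t, m⁻¹⟩] = ⟨t, m₂⟩ :: L₂
        obtain ⟨x, L₂', rfl⟩ := List.exists_cons_of_ne_nil hL₂ne
        have hx : x = ⟨t, m₂⟩ := by
          have := congrArg List.head? hL₂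
          simpa using this
        exact hhead₂ x rfl (by rw [hx])
      · rw [if_neg hmm] at hkey
        have h1 := congrArg List.length hkey
        simp [length_rinv] at h1
        omega
    · exfalso
      have hkey := key a₀
      rw [hmul a₀, equiv_of_mul hq (inv_ne_one.2 ha₀)] at hkey
      have h1 := congrArg List.length hkey
      rw [hLinv] at h1
      have h3 := congrArg List.length hL
      split_ifs at h1 <;> simp [length_rinv] at h1 h3 <;> omega
  · by_cases hq : (Word.equiv g⁻¹).fstIdx = some t
    · exfalso
      obtain ⟨m₂, L₂, hm₂1, hL₂, hhead₂, hmul₂⟩ := exists_head hq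
      have hkey := key a₀
      rw [equiv_of_mul hp ha₀, hmul₂ a₀⁻¹] at hkey
      have h1 := congrArg List.length hkey
      have h2 := congrArg List.length hL₂
      rw [hLinv] at h2
      split_ifs at h1 <;> simp [length_rinv] at h1 h2 <;> omega
    · have hkey := key a₀
      rw [equiv_of_mul hp ha₀, equiv_of_mul hq (inv_ne_one.2 ha₀), rinv_cons, hLinv,
        rinv_rinv] at hkey
      rcases hL : (Word.equiv g).toList with _ | ⟨x, L''⟩
      · exact ⟨1, by rw [word_eq_nil hL, map_one]⟩
      exfalso
      rw [hL] at hkey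
      have hx : x = ⟨t, a₀⟩ := by
        have := congrArg List.head? hkey
        simpa using this.symm
      apply hp
      rw [Word.fstIdx, hL, hx]
      rfl

universe u v

theorem transfer {A : Type u} {B : Type v} [Group A] [Group B] [Nontrivial A] :
    Subgroup.centralizer
        (((Monoid.Coprod.inl : A →* Monoid.Coprod A B).range : Subgroup (Monoid.Coprod A B)) :
          Set (Monoid.Coprod A B)) ≤
      (Monoid.Coprod.inl : A →* Monoid.Coprod A B).range := by
  classical
  intro g hg
  rw [Subgroup.mem_centralizer_iff] at hg
  set M : Bool → Type (max u v) := fun b => cond b (ULift.{v} A) (ULift.{u} B) with hM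
  letI : ∀ b, Group (M b) := fun b => match b with
    | true => (inferInstance : Group (ULift A))
    | false => (inferInstance : Group (ULift B))
  letI : Nontrivial (M true) := inferInstanceAs (Nontrivial (ULift A))
  let e : Monoid.Coprod A B →* Monoid.CoprodI M :=
    Monoid.Coprod.lift
      ((Monoid.CoprodI.of (i := true)).comp (MulEquiv.ulift (α := A)).symm.toMonoidHom)
      ((Monoid.CoprodI.of (i := false)).comp (MulEquiv.ulift (α := B)).symm.toMonoidHom)
  let f : Monoid.CoprodI M →* Monoid.Coprod A B :=
    Monoid.CoprodI.lift fun b => match b with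
      | true => (Monoid.Coprod.inl : A →* Monoid.Coprod A B).comp
          (MulEquiv.ulift (α := A)).toMonoidHom
      | false => (Monoid.Coprod.inr : B →* Monoid.Coprod A B).comp
          (MulEquiv.ulift (α := B)).toMonoidHom
  have hfe : ∀ x, f (e x) = x := by
    intro x
    have : f.comp e = MonoidHom.id _ := by
      apply Monoid.Coprod.hom_ext <;> ext y <;>
        simp [e, f, Monoid.Coprod.lift_apply_inl, Monoid.Coprod.lift_apply_inr,
          MulEquiv.apply_symm_apply] <;> rfl
    calc f (e x) = (f.comp e) x := rfl
    _ = x := by rw [this]; rfl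
  have hcomm : ∀ a : M true, Monoid.CoprodI.of a * e g = e g * Monoid.CoprodI.of a := by
    intro a
    have h1 : (Monoid.CoprodI.of a : Monoid.CoprodI M) = e (Monoid.Coprod.inl a.down) := by
      simp [e, Monoid.Coprod.lift_apply_inl]
      rfl
    rw [h1, ← map_mul, ← map_mul, hg _ ⟨a.down, rfl⟩]
  obtain ⟨a, ha⟩ := Stmt11Aux.main true (e g) hcomm
  refine ⟨a.down, ?_⟩
  have h2 := congrArg f ha
  rw [hfe] at h2
  rw [h2]
  simp [f]
  rfl

end Stmt11Aux

/-- Let `A` and `B` be groups with `A` nontrivial, and `G = A ∗ B` their free product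
with canonical inclusion `ι_A : A → G`. Then the centralizer of `ι_A(A)` in `G` is
contained in `ι_A(A)`. -/
theorem stmt11 {A B : Type*} [Group A] [Group B] [Nontrivial A] :
    Subgroup.centralizer
        (((Monoid.Coprod.inl : A →* Monoid.Coprod A B).range : Subgroup (Monoid.Coprod A B)) :
          Set (Monoid.Coprod A B)) ≤
      (Monoid.Coprod.inl : A →* Monoid.Coprod A B).range := Stmt11Aux.transfer
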